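/- Let K be a star K_{1,r} in FQ_n with n ≥ 5 and 2 ≤ r ≤ n+1, and let C be a connected subgraph of FQ_n disjoint from K with k = |V(C)| ≥ 2 vertices. Then at most 2(k−1) vertices of K have a neighbor in C. -/

import Mathlib

def Q (n : ℕ) : SimpleGraph (Fin n → ZMod 2) :=
  SimpleGraph.fromRel (fun u v => hammingDist u v = 1)

def FQ (n : ℕ) : SimpleGraph (Fin n → ZMod 2) :=
  SimpleGraph.fromRel (fun u v => hammingDist u v = 1 ∨ hammingDist u v = n)

namespace FQaux

/-- difference vectors of adjacent vertices in `FQ n` -/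
def B {n : ℕ} (d : Fin n → ZMod 2) : Prop :=
  (∃ i, d = Pi.single i 1) ∨ d = fun _ => 1

lemma addself {n : ℕ} (u : Fin n → ZMod 2) : u + u = 0 := by
  funext j
  exact (by decide : ∀ a : ZMod 2, a + a = 0) (u j)

lemma eq_of_add_eq_zero {n : ℕ} {u v : Fin n → ZMod 2} (h : u + v = 0) : u = v := by
  funext j
  exact (by decide : ∀ a b : ZMod 2, a + b = 0 → a = b) _ _ (congrFun h j)

lemma exists_avoid {n : ℕ} (hn : 5 ≤ n) (a b c d : Fin n) :
    ∃ p : Fin n, p ≠ a ∧ p ≠ b ∧ p ≠ c ∧ p ≠ d := by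
  by_contra hcon
  push_neg at hcon
  have hsub : (Finset.univ : Finset (Fin n)) ⊆ {a, b, c, d} := by
    intro p _
    simp only [Finset.mem_insert, Finset.mem_singleton]
    by_cases h1 : p = a
    · exact Or.inl h1
    by_cases h2 : p = b
    · exact Or.inr (Or.inl h2)
    by_cases h3 : p = c
    · exact Or.inr (Or.inr (Or.inl h3))
    · exact Or.inr (Or.inr (Or.inr (hcon p h1 h2 h3)))
  have h4 : ({a, b, c, d} : Finset (Fin n)).card ≤ 4 := by
    apply le_trans (Finset.card_insert_le _ _)
    have h3 : ({b, c, d} : Finset (Fin n)).card ≤ 3 := by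
      apply le_trans (Finset.card_insert_le _ _)
      have h2 : ({c, d} : Finset (Fin n)).card ≤ 2 :=
        le_trans (Finset.card_insert_le _ _) (by simp)
      omega
    omega
  have h5 := Finset.card_le_card hsub
  rw [Finset.card_univ, Fintype.card_fin] at h5
  omega

lemma phi_single {n : ℕ} (i : Fin n) : ∑ j, Pi.single i (1 : ZMod 2) j = 1 := by
  simp [Finset.sum_pi_single']

lemma phi_one {n : ℕ} : (∑ _j : Fin n, (1 : ZMod 2)) = (n : ZMod 2) := by
  simp [Finset.sum_const, nsmul_eq_mul]

lemma Bsum5 {n : ℕ} (hn : 5 ≤ n) {f1 f2 f3 f4 f5 : Fin n → ZMod 2}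
    (h1 : B f1) (h2 : B f2) (h3 : B f3) (h4 : B f4) (h5 : B f5) :
    f1 + f2 + f3 + f4 + f5 ≠ 0 := by
  intro h
  rcases h1 with ⟨i1, rfl⟩ | rfl <;> rcases h2 with ⟨i2, rfl⟩ | rfl <;>
    rcases h3 with ⟨i3, rfl⟩ | rfl <;> rcases h4 with ⟨i4, rfl⟩ | rfl <;>
      rcases h5 with ⟨i5, rfl⟩ | rfl
  · have h2 := congrArg (fun d : Fin n → ZMod 2 => ∑ j, d j) h
    simp only [Pi.add_apply, Finset.sum_add_distrib, phi_single, phi_one, Pi.zero_apply, Finset.sum_const, Finset.card_univ, Fintype.card_fin, nsmul_eq_mul, mul_one, mul_zero, Finset.sum_const_zero] at h2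
    revert h2; decide
  · obtain ⟨p, hpa, hpb, hpc, hpd⟩ := exists_avoid hn i1 i2 i3 i4
    have hq := congrFun h p
    simp only [Pi.add_apply, Pi.zero_apply, Pi.single_eq_of_ne hpa, Pi.single_eq_of_ne hpb, Pi.single_eq_of_ne hpc, Pi.single_eq_of_ne hpd] at hq
    exact absurd hq (by decide)
  · obtain ⟨p, hpa, hpb, hpc, hpd⟩ := exists_avoid hn i1 i2 i3 i5
    have hq := congrFun h p
    simp only [Pi.add_apply, Pi.zero_apply, Pi.single_eq_of_ne hpa, Pi.single_eq_of_ne hpb, Pi.single_eq_of_ne hpc, Pi.single_eq_of_ne hpd] at hq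
    exact absurd hq (by decide)
  · have h2 := congrArg (fun d : Fin n → ZMod 2 => ∑ j, d j) h
    simp only [Pi.add_apply, Finset.sum_add_distrib, phi_single, phi_one, Pi.zero_apply, Finset.sum_const, Finset.card_univ, Fintype.card_fin, nsmul_eq_mul, mul_one, mul_zero, Finset.sum_const_zero] at h2
    rcases (by decide : ∀ a : ZMod 2, a = 0 ∨ a = 1) ((n : ZMod 2)) with hc | hc <;> rw [hc] at h2 <;> revert h2 <;> decide
  · obtain ⟨p, hpa, hpb, hpc, hpd⟩ := exists_avoid hn i1 i2 i4 i5
    have hq := congrFun h p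
    simp only [Pi.add_apply, Pi.zero_apply, Pi.single_eq_of_ne hpa, Pi.single_eq_of_ne hpb, Pi.single_eq_of_ne hpc, Pi.single_eq_of_ne hpd] at hq
    exact absurd hq (by decide)
  · have h2 := congrArg (fun d : Fin n → ZMod 2 => ∑ j, d j) h
    simp only [Pi.add_apply, Finset.sum_add_distrib, phi_single, phi_one, Pi.zero_apply, Finset.sum_const, Finset.card_univ, Fintype.card_fin, nsmul_eq_mul, mul_one, mul_zero, Finset.sum_const_zero] at h2
    rcases (by decide : ∀ a : ZMod 2, a = 0 ∨ a = 1) ((n : ZMod 2)) with hc | hc <;> rw [hc] at h2 <;> revert h2 <;> decide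
  · have h2 := congrArg (fun d : Fin n → ZMod 2 => ∑ j, d j) h
    simp only [Pi.add_apply, Finset.sum_add_distrib, phi_single, phi_one, Pi.zero_apply, Finset.sum_const, Finset.card_univ, Fintype.card_fin, nsmul_eq_mul, mul_one, mul_zero, Finset.sum_const_zero] at h2
    rcases (by decide : ∀ a : ZMod 2, a = 0 ∨ a = 1) ((n : ZMod 2)) with hc | hc <;> rw [hc] at h2 <;> revert h2 <;> decide
  · obtain ⟨p, hpa, hpb, hpc, hpd⟩ := exists_avoid hn i1 i2 i2 i2
    have hq := congrFun h p
    simp only [Pi.add_apply, Pi.zero_apply, Pi.single_eq_of_ne hpa, Pi.single_eq_of_ne hpb] at hq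
    exact absurd hq (by decide)
  · obtain ⟨p, hpa, hpb, hpc, hpd⟩ := exists_avoid hn i1 i3 i4 i5
    have hq := congrFun h p
    simp only [Pi.add_apply, Pi.zero_apply, Pi.single_eq_of_ne hpa, Pi.single_eq_of_ne hpb, Pi.single_eq_of_ne hpc, Pi.single_eq_of_ne hpd] at hq
    exact absurd hq (by decide)
  · have h2 := congrArg (fun d : Fin n → ZMod 2 => ∑ j, d j) h
    simp only [Pi.add_apply, Finset.sum_add_distrib, phi_single, phi_one, Pi.zero_apply, Finset.sum_const, Finset.card_univ, Fintype.card_fin, nsmul_eq_mul, mul_one, mul_zero, Finset.sum_const_zero] at h2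
    rcases (by decide : ∀ a : ZMod 2, a = 0 ∨ a = 1) ((n : ZMod 2)) with hc | hc <;> rw [hc] at h2 <;> revert h2 <;> decide
  · have h2 := congrArg (fun d : Fin n → ZMod 2 => ∑ j, d j) h
    simp only [Pi.add_apply, Finset.sum_add_distrib, phi_single, phi_one, Pi.zero_apply, Finset.sum_const, Finset.card_univ, Fintype.card_fin, nsmul_eq_mul, mul_one, mul_zero, Finset.sum_const_zero] at h2
    rcases (by decide : ∀ a : ZMod 2, a = 0 ∨ a = 1) ((n : ZMod 2)) with hc | hc <;> rw [hc] at h2 <;> revert h2 <;> decide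
  · obtain ⟨p, hpa, hpb, hpc, hpd⟩ := exists_avoid hn i1 i3 i3 i3
    have hq := congrFun h p
    simp only [Pi.add_apply, Pi.zero_apply, Pi.single_eq_of_ne hpa, Pi.single_eq_of_ne hpb] at hq
    exact absurd hq (by decide)
  · have h2 := congrArg (fun d : Fin n → ZMod 2 => ∑ j, d j) h
    simp only [Pi.add_apply, Finset.sum_add_distrib, phi_single, phi_one, Pi.zero_apply, Finset.sum_const, Finset.card_univ, Fintype.card_fin, nsmul_eq_mul, mul_one, mul_zero, Finset.sum_const_zero] at h2
    rcases (by decide : ∀ a : ZMod 2, a = 0 ∨ a = 1) ((n : ZMod 2)) with hc | hc <;> rw [hc] at h2 <;> revert h2 <;> decide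
  · obtain ⟨p, hpa, hpb, hpc, hpd⟩ := exists_avoid hn i1 i4 i4 i4
    have hq := congrFun h p
    simp only [Pi.add_apply, Pi.zero_apply, Pi.single_eq_of_ne hpa, Pi.single_eq_of_ne hpb] at hq
    exact absurd hq (by decide)
  · obtain ⟨p, hpa, hpb, hpc, hpd⟩ := exists_avoid hn i1 i5 i5 i5
    have hq := congrFun h p
    simp only [Pi.add_apply, Pi.zero_apply, Pi.single_eq_of_ne hpa, Pi.single_eq_of_ne hpb] at hq
    exact absurd hq (by decide)
  · have h2 := congrArg (fun d : Fin n → ZMod 2 => ∑ j, d j) h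
    simp only [Pi.add_apply, Finset.sum_add_distrib, phi_single, phi_one, Pi.zero_apply, Finset.sum_const, Finset.card_univ, Fintype.card_fin, nsmul_eq_mul, mul_one, mul_zero, Finset.sum_const_zero] at h2
    rcases (by decide : ∀ a : ZMod 2, a = 0 ∨ a = 1) ((n : ZMod 2)) with hc | hc <;> rw [hc] at h2 <;> revert h2 <;> decide
  · obtain ⟨p, hpa, hpb, hpc, hpd⟩ := exists_avoid hn i2 i3 i4 i5
    have hq := congrFun h p
    simp only [Pi.add_apply, Pi.zero_apply, Pi.single_eq_of_ne hpa, Pi.single_eq_of_ne hpb, Pi.single_eq_of_ne hpc, Pi.single_eq_of_ne hpd] at hq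
    exact absurd hq (by decide)
  · have h2 := congrArg (fun d : Fin n → ZMod 2 => ∑ j, d j) h
    simp only [Pi.add_apply, Finset.sum_add_distrib, phi_single, phi_one, Pi.zero_apply, Finset.sum_const, Finset.card_univ, Fintype.card_fin, nsmul_eq_mul, mul_one, mul_zero, Finset.sum_const_zero] at h2
    rcases (by decide : ∀ a : ZMod 2, a = 0 ∨ a = 1) ((n : ZMod 2)) with hc | hc <;> rw [hc] at h2 <;> revert h2 <;> decide
  · have h2 := congrArg (fun d : Fin n → ZMod 2 => ∑ j, d j) h
    simp only [Pi.add_apply, Finset.sum_add_distrib, phi_single, phi_one, Pi.zero_apply, Finset.sum_const, Finset.card_univ, Fintype.card_fin, nsmul_eq_mul, mul_one, mul_zero, Finset.sum_const_zero] at h2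
    rcases (by decide : ∀ a : ZMod 2, a = 0 ∨ a = 1) ((n : ZMod 2)) with hc | hc <;> rw [hc] at h2 <;> revert h2 <;> decide
  · obtain ⟨p, hpa, hpb, hpc, hpd⟩ := exists_avoid hn i2 i3 i3 i3
    have hq := congrFun h p
    simp only [Pi.add_apply, Pi.zero_apply, Pi.single_eq_of_ne hpa, Pi.single_eq_of_ne hpb] at hq
    exact absurd hq (by decide)
  · have h2 := congrArg (fun d : Fin n → ZMod 2 => ∑ j, d j) h
    simp only [Pi.add_apply, Finset.sum_add_distrib, phi_single, phi_one, Pi.zero_apply, Finset.sum_const, Finset.card_univ, Fintype.card_fin, nsmul_eq_mul, mul_one, mul_zero, Finset.sum_const_zero] at h2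
    rcases (by decide : ∀ a : ZMod 2, a = 0 ∨ a = 1) ((n : ZMod 2)) with hc | hc <;> rw [hc] at h2 <;> revert h2 <;> decide
  · obtain ⟨p, hpa, hpb, hpc, hpd⟩ := exists_avoid hn i2 i4 i4 i4
    have hq := congrFun h p
    simp only [Pi.add_apply, Pi.zero_apply, Pi.single_eq_of_ne hpa, Pi.single_eq_of_ne hpb] at hq
    exact absurd hq (by decide)
  · obtain ⟨p, hpa, hpb, hpc, hpd⟩ := exists_avoid hn i2 i5 i5 i5
    have hq := congrFun h p
    simp only [Pi.add_apply, Pi.zero_apply, Pi.single_eq_of_ne hpa, Pi.single_eq_of_ne hpb] at hq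
    exact absurd hq (by decide)
  · have h2 := congrArg (fun d : Fin n → ZMod 2 => ∑ j, d j) h
    simp only [Pi.add_apply, Finset.sum_add_distrib, phi_single, phi_one, Pi.zero_apply, Finset.sum_const, Finset.card_univ, Fintype.card_fin, nsmul_eq_mul, mul_one, mul_zero, Finset.sum_const_zero] at h2
    rcases (by decide : ∀ a : ZMod 2, a = 0 ∨ a = 1) ((n : ZMod 2)) with hc | hc <;> rw [hc] at h2 <;> revert h2 <;> decide
  · have h2 := congrArg (fun d : Fin n → ZMod 2 => ∑ j, d j) h
    simp only [Pi.add_apply, Finset.sum_add_distrib, phi_single, phi_one, Pi.zero_apply, Finset.sum_const, Finset.card_univ, Fintype.card_fin, nsmul_eq_mul, mul_one, mul_zero, Finset.sum_const_zero] at h2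
    rcases (by decide : ∀ a : ZMod 2, a = 0 ∨ a = 1) ((n : ZMod 2)) with hc | hc <;> rw [hc] at h2 <;> revert h2 <;> decide
  · obtain ⟨p, hpa, hpb, hpc, hpd⟩ := exists_avoid hn i3 i4 i4 i4
    have hq := congrFun h p
    simp only [Pi.add_apply, Pi.zero_apply, Pi.single_eq_of_ne hpa, Pi.single_eq_of_ne hpb] at hq
    exact absurd hq (by decide)
  · obtain ⟨p, hpa, hpb, hpc, hpd⟩ := exists_avoid hn i3 i5 i5 i5
    have hq := congrFun h p
    simp only [Pi.add_apply, Pi.zero_apply, Pi.single_eq_of_ne hpa, Pi.single_eq_of_ne hpb] at hq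
    exact absurd hq (by decide)
  · have h2 := congrArg (fun d : Fin n → ZMod 2 => ∑ j, d j) h
    simp only [Pi.add_apply, Finset.sum_add_distrib, phi_single, phi_one, Pi.zero_apply, Finset.sum_const, Finset.card_univ, Fintype.card_fin, nsmul_eq_mul, mul_one, mul_zero, Finset.sum_const_zero] at h2
    rcases (by decide : ∀ a : ZMod 2, a = 0 ∨ a = 1) ((n : ZMod 2)) with hc | hc <;> rw [hc] at h2 <;> revert h2 <;> decide
  · obtain ⟨p, hpa, hpb, hpc, hpd⟩ := exists_avoid hn i4 i5 i5 i5
    have hq := congrFun h p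
    simp only [Pi.add_apply, Pi.zero_apply, Pi.single_eq_of_ne hpa, Pi.single_eq_of_ne hpb] at hq
    exact absurd hq (by decide)
  · have h2 := congrArg (fun d : Fin n → ZMod 2 => ∑ j, d j) h
    simp only [Pi.add_apply, Finset.sum_add_distrib, phi_single, phi_one, Pi.zero_apply, Finset.sum_const, Finset.card_univ, Fintype.card_fin, nsmul_eq_mul, mul_one, mul_zero, Finset.sum_const_zero] at h2
    rcases (by decide : ∀ a : ZMod 2, a = 0 ∨ a = 1) ((n : ZMod 2)) with hc | hc <;> rw [hc] at h2 <;> revert h2 <;> decide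
  · have h2 := congrArg (fun d : Fin n → ZMod 2 => ∑ j, d j) h
    simp only [Pi.add_apply, Finset.sum_add_distrib, phi_single, phi_one, Pi.zero_apply, Finset.sum_const, Finset.card_univ, Fintype.card_fin, nsmul_eq_mul, mul_one, mul_zero, Finset.sum_const_zero] at h2
    rcases (by decide : ∀ a : ZMod 2, a = 0 ∨ a = 1) ((n : ZMod 2)) with hc | hc <;> rw [hc] at h2 <;> revert h2 <;> decide
  · have hq := congrFun h (⟨0, by omega⟩ : Fin n)
    simp only [Pi.add_apply, Pi.zero_apply] at hq
    exact absurd hq (by decide)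


lemma Bsum3 {n : ℕ} (hn : 5 ≤ n) {f1 f2 f3 : Fin n → ZMod 2}
    (h1 : B f1) (h2 : B f2) (h3 : B f3) : f1 + f2 + f3 ≠ 0 := by
  intro h
  have i0 : Fin n := ⟨0, by omega⟩
  apply Bsum5 hn h1 h2 h3 (Or.inl ⟨i0, rfl⟩) (Or.inl ⟨i0, rfl⟩)
  have hs : (Pi.single i0 (1 : ZMod 2) + Pi.single i0 1 : Fin n → ZMod 2) = 0 := addself _
  calc f1 + f2 + f3 + Pi.single i0 1 + Pi.single i0 1
      = (f1 + f2 + f3) + (Pi.single i0 1 + Pi.single i0 1) := by abel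
    _ = 0 := by rw [h, hs, add_zero]

lemma hd_card {n : ℕ} (u v : Fin n → ZMod 2) :
    hammingDist u v = (Finset.univ.filter fun i => u i ≠ v i).card := rfl

lemma adjB {n : ℕ} {u v : Fin n → ZMod 2} (h : (FQ n).Adj u v) : B (u + v) := by
  rw [FQ, SimpleGraph.fromRel_adj] at h
  obtain ⟨hne, hd⟩ := h
  have hd' : hammingDist u v = 1 ∨ hammingDist u v = n := by
    rcases hd with h | h
    · exact h
    · rwa [hammingDist_comm] at h
  rcases hd' with h1 | hn'
  · rw [hd_card] at h1
    obtain ⟨i, hi⟩ := Finset.card_eq_one.mp h1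
    left
    refine ⟨i, funext fun j => ?_⟩
    by_cases hj : j = i
    · subst hj
      have : j ∈ Finset.univ.filter fun i => u i ≠ v i := by rw [hi]; exact Finset.mem_singleton_self j
      have hne' : u j ≠ v j := (Finset.mem_filter.mp this).2
      rw [Pi.single_eq_same]
      exact (by decide : ∀ a b : ZMod 2, a ≠ b → a + b = 1) _ _ hne'
    · have : j ∉ Finset.univ.filter fun i => u i ≠ v i := by rw [hi]; simpa using hj
      have heq : u j = v j := by
        by_contra hne'
        exact this (Finset.mem_filter.mpr ⟨Finset.mem_univ j, hne'⟩)
      rw [Pi.single_eq_of_ne hj]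
      exact (by decide : ∀ a b : ZMod 2, a = b → a + b = 0) _ _ heq
  · rw [hd_card] at hn'
    right
    have huniv : (Finset.univ.filter fun i => u i ≠ v i) = Finset.univ :=
      Finset.eq_univ_of_card _ (by rw [hn', Fintype.card_fin])
    funext j
    have : j ∈ Finset.univ.filter fun i => u i ≠ v i := by rw [huniv]; exact Finset.mem_univ j
    exact (by decide : ∀ a b : ZMod 2, a ≠ b → a + b = 1) _ _ (Finset.mem_filter.mp this).2

lemma no_triangle {n : ℕ} (hn : 5 ≤ n) {p q r : Fin n → ZMod 2}
    (h1 : (FQ n).Adj p q) (h2 : (FQ n).Adj q r) (h3 : (FQ n).Adj p r) : False := by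
  apply Bsum3 hn (adjB h1) (adjB h2) (adjB h3)
  funext j
  exact (by decide : ∀ a b c : ZMod 2, (a + b) + (b + c) + (a + c) = 0) _ _ _

lemma no_pentagon {n : ℕ} (hn : 5 ≤ n) {a b c d e : Fin n → ZMod 2}
    (h1 : (FQ n).Adj a b) (h2 : (FQ n).Adj b c) (h3 : (FQ n).Adj c d)
    (h4 : (FQ n).Adj d e) (h5 : (FQ n).Adj e a) : False := by
  apply Bsum5 hn (adjB h1) (adjB h2) (adjB h3) (adjB h4) (adjB h5)
  funext j
  exact (by decide :
    ∀ a b c d e : ZMod 2, (a + b) + (b + c) + (c + d) + (d + e) + (e + a) = 0) _ _ _ _ _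


lemma common_nbrs {n : ℕ} (hn : 5 ≤ n) {a b u v w : Fin n → ZMod 2}
    (hab : a ≠ b) (huv : u ≠ v) (huw : u ≠ w) (hvw : v ≠ w)
    (h1 : B (a + u)) (h2 : B (u + b)) (h3 : B (a + v)) (h4 : B (v + b))
    (h5 : B (a + w)) (h6 : B (w + b)) : False := by
  have hs0 : a + b ≠ 0 := fun h0 => hab (eq_of_add_eq_zero h0)
  have hsum : ∀ y : Fin n → ZMod 2, (a + y) + (y + b) = a + b := by
    intro y; funext j
    exact (by decide : ∀ p q r : ZMod 2, (p + q) + (q + r) = p + r) _ _ _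
  by_cases hP : ∃ c : Fin n, a + b = (fun _ => 1) + Pi.single c 1
  · obtain ⟨c, hc⟩ := hP
    have key : ∀ y : Fin n → ZMod 2, B (a + y) → B (y + b) →
        a + y = (fun _ => 1) ∨ a + y = Pi.single c 1 := by
      intro y hBd hBe
      rcases hBd with ⟨i, hi⟩ | hone
      · rcases hBe with ⟨j, hj⟩ | hone'
        · exfalso
          have hse := hsum y
          rw [hi, hj, hc] at hse
          obtain ⟨p, hpi, hpj, hpc, -⟩ := exists_avoid hn i j c c
          have hq := congrFun hse p
          simp only [Pi.add_apply, Pi.single_eq_of_ne hpi, Pi.single_eq_of_ne hpj,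
            Pi.single_eq_of_ne hpc] at hq
          exact absurd hq (by decide)
        · right
          have hse := hsum y
          rw [hi, hone', hc] at hse
          rw [hi]
          funext j
          have hq := congrFun hse j
          simp only [Pi.add_apply] at hq
          exact (by decide : ∀ p q : ZMod 2, p + 1 = 1 + q → p = q) _ _ hq
      · exact Or.inl hone
    rcases key u h1 h2 with k1 | k1 <;> rcases key v h3 h4 with k2 | k2 <;>
        rcases key w h5 h6 with k3 | k3 <;>
      first
        | exact huv (add_left_cancel (k1.trans k2.symm))
        | exact huw (add_left_cancel (k1.trans k3.symm))
        | exact hvw (add_left_cancel (k2.trans k3.symm))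
  · have key : ∀ y : Fin n → ZMod 2, B (a + y) → B (y + b) →
        ∃ i j : Fin n, a + y = Pi.single i 1 ∧ y + b = Pi.single j 1 := by
      intro y hBd hBe
      rcases hBd with ⟨i, hi⟩ | hone
      · rcases hBe with ⟨j, hj⟩ | hone'
        · exact ⟨i, j, hi, hj⟩
        · exfalso
          have hse := (hsum y).symm
          rw [hi, hone'] at hse
          exact hP ⟨i, hse.trans (add_comm _ _)⟩
      · rcases hBe with ⟨j, hj⟩ | hone'
        · exfalso
          have hse := (hsum y).symm
          rw [hone, hj] at hse
          exact hP ⟨j, hse⟩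
        · exfalso
          have hse := (hsum y).symm
          rw [hone, hone'] at hse
          exact hs0 (hse.trans (addself _))
    obtain ⟨a1, b1, hd1, he1⟩ := key u h1 h2
    obtain ⟨a2, b2, hd2, he2⟩ := key v h3 h4
    obtain ⟨a3, b3, hd3, he3⟩ := key w h5 h6
    have ha12 : a1 ≠ a2 := fun h => huv (add_left_cancel (by rw [hd1, hd2, h]))
    have ha13 : a1 ≠ a3 := fun h => huw (add_left_cancel (by rw [hd1, hd3, h]))
    have ha23 : a2 ≠ a3 := fun h => hvw (add_left_cancel (by rw [hd2, hd3, h]))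
    have hab2 : a2 ≠ b2 := by
      intro h
      apply hs0
      have hse := (hsum v).symm
      rw [hd2, he2, h] at hse
      exact hse.trans (addself _)
    have hab3 : a3 ≠ b3 := by
      intro h
      apply hs0
      have hse := (hsum w).symm
      rw [hd3, he3, h] at hse
      exact hse.trans (addself _)
    have hstep : ∀ (a' b' : Fin n), a1 ≠ a' → a' ≠ b' →
        (Pi.single a1 (1 : ZMod 2) + Pi.single b1 1 : Fin n → ZMod 2) =
          Pi.single a' 1 + Pi.single b' 1 → b1 = a' := by
      intro a' b' hne hne' heq
      by_contra hb
      have hq := congrFun heq a'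
      simp only [Pi.add_apply, Pi.single_eq_same, Pi.single_eq_of_ne (Ne.symm hne),
        Pi.single_eq_of_ne (Ne.symm hb), Pi.single_eq_of_ne hne'] at hq
      exact absurd hq (by decide)
    have heq12 : (Pi.single a1 (1 : ZMod 2) + Pi.single b1 1 : Fin n → ZMod 2) =
        Pi.single a2 1 + Pi.single b2 1 := by
      have h12 := (hsum u).trans (hsum v).symm
      rwa [hd1, he1, hd2, he2] at h12
    have heq13 : (Pi.single a1 (1 : ZMod 2) + Pi.single b1 1 : Fin n → ZMod 2) =
        Pi.single a3 1 + Pi.single b3 1 := by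
      have h13 := (hsum u).trans (hsum w).symm
      rwa [hd1, he1, hd3, he3] at h13
    have hb12 : b1 = a2 := hstep a2 b2 ha12 hab2 heq12
    have hb13 : b1 = a3 := hstep a3 b3 ha13 hab3 heq13
    exact ha23 (hb12.symm.trans hb13)


section Graph

variable {V' : Type*} [DecidableEq V'] {G : SimpleGraph V'}

lemma induce_adj' {s : Set V'} {a b : ↥s} : (G.induce s).Adj a b ↔ G.Adj ↑a ↑b :=
  Iff.rfl

lemma exit_walk {s : Set V'} {S : Finset V'} :
    ∀ {a b : ↥s} (_ : (G.induce s).Walk a b), ↑a ∈ S → ↑b ∉ S →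
      ∃ u v : ↥s, ↑u ∈ S ∧ ↑v ∉ S ∧ G.Adj ↑u ↑v := by
  intro a b w
  induction w with
  | nil => intro ha hb; exact absurd ha hb
  | @cons p q r h w ih =>
    intro ha hb
    by_cases hq : ↑q ∈ S
    · exact ih hq hb
    · exact ⟨p, q, ha, hq, induce_adj'.mp h⟩

lemma exit {C : Finset V'} (hconn : (G.induce (C : Set V')).Connected)
    {S : Finset V'} (hS : S ⊆ C) (hne : S.Nonempty) (hssub : S ≠ C) :
    ∃ c ∈ C, c ∉ S ∧ ∃ s ∈ S, G.Adj s c := by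
  obtain ⟨s0, hs0⟩ := hne
  obtain ⟨t, htC, htS⟩ := Finset.exists_of_ssubset (hS.ssubset_of_ne hssub)
  have hreach := hconn.preconnected ⟨s0, by simpa using hS hs0⟩ ⟨t, by simpa using htC⟩
  obtain ⟨w⟩ := hreach
  obtain ⟨u, v, hu, hv, hadj⟩ := exit_walk w hs0 htS
  exact ⟨↑v, by simpa using v.2, hv, ↑u, hu, hadj⟩

lemma insert_conn {S : Finset V'} {st c : V'}
    (hconn : (G.induce (S : Set V')).Connected) (hs : st ∈ S) (hadj : G.Adj st c) :
    (G.induce ((insert c S : Finset V') : Set V')).Connected := by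
  have hsub : (S : Set V') ⊆ ((insert c S : Finset V') : Set V') := by
    intro y hy
    simp only [Finset.coe_insert, Set.mem_insert_iff]
    exact Or.inr (by simpa using hy)
  constructor
  intro u v
  have key : ∀ z : ↥((insert c S : Finset V') : Set V'),
      (G.induce ((insert c S : Finset V') : Set V')).Reachable z
        ⟨st, Finset.mem_coe.mpr (Finset.mem_insert.mpr (Or.inr hs))⟩ := by
    intro z
    have hz : ↑z = c ∨ (z : V') ∈ S := by
      have := z.2
      simpa [Finset.mem_insert] using this
    rcases hz with hzc | hzS
    · apply SimpleGraph.Adj.reachable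
      rw [induce_adj']
      simpa [hzc] using hadj.symm
    · have hr := hconn.preconnected ⟨↑z, by simpa using hzS⟩ ⟨st, by simpa using hs⟩
      exact hr.map (⟨fun w => ⟨↑w, hsub w.2⟩, fun {p q} hpq => hpq⟩ :
        G.induce (S : Set V') →g G.induce ((insert c S : Finset V') : Set V'))
  exact (key u).trans (key v).symm

lemma singleton_conn (c : V') : (G.induce (({c} : Finset V') : Set V')).Connected := by
  have hne : Nonempty ↥(({c} : Finset V') : Set V') := ⟨⟨c, by simp⟩⟩
  constructor
  intro u v
  have hu : (u : V') = c := by simpa using u.2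
  have hv : (v : V') = c := by simpa using v.2
  have huv : u = v := Subtype.ext (hu.trans hv.symm)
  rw [huv]

lemma conn_subset {C : Finset V'} (hconn : (G.induce (C : Set V')).Connected) :
    ∀ j, 1 ≤ j → j ≤ C.card → ∃ S : Finset V', S ⊆ C ∧ S.card = j ∧
      (G.induce (S : Set V')).Connected := by
  intro j
  induction j with
  | zero => intro h; omega
  | succ j ih =>
    intro _ hcard
    by_cases hj : j = 0
    · subst hj
      have : C.Nonempty := Finset.card_pos.mp (by omega)
      obtain ⟨c, hc⟩ := this
      exact ⟨{c}, Finset.singleton_subset_iff.mpr hc, Finset.card_singleton c, singleton_conn c⟩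
    · obtain ⟨S, hSC, hScard, hSconn⟩ := ih (by omega) (by omega)
      have hSne : S ≠ C := fun h => by rw [h] at hScard; omega
      have hSnonempty : S.Nonempty := Finset.card_pos.mp (by omega)
      obtain ⟨e, heC, heS, s, hsS, hadj⟩ := exit hconn hSC hSnonempty hSne
      refine ⟨insert e S, Finset.insert_subset heC hSC, ?_, insert_conn hSconn hsS hadj⟩
      rw [Finset.card_insert_of_notMem heS, hScard]

lemma removable {C : Finset V'} (hconn : (G.induce (C : Set V')).Connected)
    (hcard : 2 ≤ C.card) :
    ∃ v ∈ C, (C.erase v).card = C.card - 1 ∧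
      (G.induce ((C.erase v : Finset V') : Set V')).Connected := by
  obtain ⟨S, hSC, hScard, hSconn⟩ := conn_subset hconn (C.card - 1) (by omega) (by omega)
  have hdiff : (C \ S).card = 1 := by
    rw [Finset.card_sdiff_of_subset hSC, hScard]
    omega
  obtain ⟨v, hv⟩ := Finset.card_eq_one.mp hdiff
  have hvC : v ∈ C := by
    have : v ∈ C \ S := by rw [hv]; exact Finset.mem_singleton_self v
    exact (Finset.mem_sdiff.mp this).1
  have hvS : v ∉ S := by
    have : v ∈ C \ S := by rw [hv]; exact Finset.mem_singleton_self v
    exact (Finset.mem_sdiff.mp this).2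
  have herase : C.erase v = S := by
    apply Finset.eq_of_subset_of_card_le
    · intro y hy
      obtain ⟨hyv, hyC⟩ := Finset.mem_erase.mp hy
      by_contra hyS
      have : y ∈ C \ S := Finset.mem_sdiff.mpr ⟨hyC, hyS⟩
      rw [hv] at this
      exact hyv (Finset.mem_singleton.mp this)
    · rw [Finset.card_erase_of_mem hvC, hScard]
  refine ⟨v, hvC, ?_, ?_⟩
  · rw [Finset.card_erase_of_mem hvC]
  · rw [herase]; exact hSconn

lemma two_adj {C : Finset V'} (hconn : (G.induce (C : Set V')).Connected)
    {c c' : V'} (hcc' : c ≠ c') (hC : C = {c, c'}) : G.Adj c c' := by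
  have hcS : c ∈ C := by rw [hC]; simp
  have hcard : C.card = 2 := by rw [hC]; rw [Finset.card_insert_of_notMem (by simpa using hcc'), Finset.card_singleton]
  obtain ⟨e, heC, heS, s, hsS, hadj⟩ := exit hconn (S := {c})
    (Finset.singleton_subset_iff.mpr hcS) ⟨c, Finset.mem_singleton_self c⟩
    (fun h => by rw [← h] at hcard; simp at hcard)
  have hs : s = c := Finset.mem_singleton.mp hsS
  have he : e = c' := by
    rw [hC] at heC
    rcases Finset.mem_insert.mp heC with h | h
    · exact absurd (by rw [h]; exact Finset.mem_singleton_self c) heS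
    · exact Finset.mem_singleton.mp h
  rw [← hs, ← he]
  exact hadj

end Graph


instance FQdec {n : ℕ} : DecidableRel (FQ n).Adj := fun u v =>
  decidable_of_iff _ (SimpleGraph.fromRel_adj _ u v).symm

variable {n r : ℕ}

/-- the vertex set of the star -/
def Kf (x : Fin n → ZMod 2) (xs : Fin r → Fin n → ZMod 2) : Finset (Fin n → ZMod 2) :=
  insert x (Finset.image xs Finset.univ)

lemma mem_Kf {x : Fin n → ZMod 2} {xs : Fin r → Fin n → ZMod 2} {y : Fin n → ZMod 2} :
    y ∈ Kf x xs ↔ y = x ∨ ∃ i, y = xs i := by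
  simp [Kf, eq_comm]

lemma x_mem_Kf {x : Fin n → ZMod 2} {xs : Fin r → Fin n → ZMod 2} : x ∈ Kf x xs :=
  Finset.mem_insert_self _ _

/-- neighbours of `c` in the star -/
def NK (x : Fin n → ZMod 2) (xs : Fin r → Fin n → ZMod 2) (c : Fin n → ZMod 2) :
    Finset (Fin n → ZMod 2) :=
  (Kf x xs).filter fun y => (FQ n).Adj c y

lemma F1x (hn : 5 ≤ n) {x : Fin n → ZMod 2} {xs : Fin r → Fin n → ZMod 2}
    (hadj : ∀ i, (FQ n).Adj x (xs i)) {c : Fin n → ZMod 2}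
    (hcx : (FQ n).Adj c x) : NK x xs c ⊆ {x} := by
  intro y hy
  obtain ⟨hyK, hyadj⟩ := Finset.mem_filter.mp hy
  rcases mem_Kf.mp hyK with h | ⟨i, h⟩
  · simpa using h
  · subst h
    exact absurd (no_triangle hn hcx (hadj i) hyadj) id

lemma F1' (hn : 5 ≤ n) {x : Fin n → ZMod 2} {xs : Fin r → Fin n → ZMod 2}
    (hadj : ∀ i, (FQ n).Adj x (xs i)) {c : Fin n → ZMod 2}
    (hcx : ¬ (FQ n).Adj c x) (hcK : c ∉ Kf x xs) : (NK x xs c).card ≤ 2 := by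
  by_contra hcon
  obtain ⟨y1, y2, y3, hy1, hy2, hy3, h12, h13, h23⟩ :=
    (Finset.two_lt_card_iff (s := NK x xs c)).mp (by omega)
  have hxy : ∀ y ∈ NK x xs c, (FQ n).Adj x y ∧ (FQ n).Adj c y := by
    intro y hy
    obtain ⟨hyK, hyadj⟩ := Finset.mem_filter.mp hy
    rcases mem_Kf.mp hyK with h | ⟨i, h⟩
    · exact absurd (h ▸ hyadj) hcx
    · exact ⟨h ▸ hadj i, hyadj⟩
  have hxc : x ≠ c := fun h => hcK (h ▸ x_mem_Kf)
  exact common_nbrs hn hxc h12 h13 h23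
    (adjB (hxy y1 hy1).1) (adjB (hxy y1 hy1).2.symm)
    (adjB (hxy y2 hy2).1) (adjB (hxy y2 hy2).2.symm)
    (adjB (hxy y3 hy3).1) (adjB (hxy y3 hy3).2.symm)

lemma F1 (hn : 5 ≤ n) {x : Fin n → ZMod 2} {xs : Fin r → Fin n → ZMod 2}
    (hadj : ∀ i, (FQ n).Adj x (xs i)) {c : Fin n → ZMod 2}
    (hcK : c ∉ Kf x xs) : (NK x xs c).card ≤ 2 := by
  by_cases hcx : (FQ n).Adj c x
  · have := Finset.card_le_card (F1x hn hadj hcx)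
    rw [Finset.card_singleton] at this
    omega
  · exact F1' hn hadj hcx hcK

lemma pairx (hn : 5 ≤ n) {x : Fin n → ZMod 2} {xs : Fin r → Fin n → ZMod 2}
    (hadj : ∀ i, (FQ n).Adj x (xs i)) {c c' : Fin n → ZMod 2}
    (hcc' : (FQ n).Adj c c') (hcK : c ∉ Kf x xs) (hc'K : c' ∉ Kf x xs)
    (hcx : (FQ n).Adj c x) : (NK x xs c ∪ NK x xs c').card ≤ 2 := by
  have hc'x : ¬ (FQ n).Adj c' x := fun h => no_triangle hn hcc' h hcx
  have h1 : (NK x xs c).card ≤ 1 := by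
    have := Finset.card_le_card (F1x hn hadj hcx)
    rwa [Finset.card_singleton] at this
  have h2 : (NK x xs c').card ≤ 1 := by
    by_contra hcon
    obtain ⟨y1, hy1, y2, hy2, h12⟩ := (Finset.one_lt_card (s := NK x xs c')).mp (by omega)
    have hxy : ∀ y ∈ NK x xs c', (FQ n).Adj x y ∧ (FQ n).Adj c' y := by
      intro y hy
      obtain ⟨hyK, hyadj⟩ := Finset.mem_filter.mp hy
      rcases mem_Kf.mp hyK with h | ⟨i, h⟩
      · exact absurd (h ▸ hyadj) hc'x
      · exact ⟨h ▸ hadj i, hyadj⟩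
    have hxc' : x ≠ c' := fun h => hc'K (h ▸ x_mem_Kf)
    have hy1c : y1 ≠ c := fun h => hcK (h ▸ (Finset.mem_filter.mp hy1).1)
    have hy2c : y2 ≠ c := fun h => hcK (h ▸ (Finset.mem_filter.mp hy2).1)
    exact common_nbrs hn hxc' h12 hy1c hy2c
      (adjB (hxy y1 hy1).1) (adjB (hxy y1 hy1).2.symm)
      (adjB (hxy y2 hy2).1) (adjB (hxy y2 hy2).2.symm)
      (adjB hcx.symm) (adjB hcc')
  calc (NK x xs c ∪ NK x xs c').card ≤ (NK x xs c).card + (NK x xs c').card :=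
        Finset.card_union_le _ _
    _ ≤ 2 := by omega

lemma F2 (hn : 5 ≤ n) {x : Fin n → ZMod 2} {xs : Fin r → Fin n → ZMod 2}
    (hadj : ∀ i, (FQ n).Adj x (xs i)) {c c' : Fin n → ZMod 2}
    (hcc' : (FQ n).Adj c c') (hcK : c ∉ Kf x xs) (hc'K : c' ∉ Kf x xs) :
    (NK x xs c ∪ NK x xs c').card ≤ 2 := by
  by_cases hcx : (FQ n).Adj c x
  · exact pairx hn hadj hcc' hcK hc'K hcx
  by_cases hc'x : (FQ n).Adj c' x
  · rw [Finset.union_comm]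
    exact pairx hn hadj hcc'.symm hc'K hcK hc'x
  have hempty : NK x xs c = ∅ ∨ NK x xs c' = ∅ := by
    by_contra hcon
    push_neg at hcon
    obtain ⟨h1, h2⟩ := hcon
    obtain ⟨y, hy⟩ := h1
    obtain ⟨y', hy'⟩ := h2
    obtain ⟨hyK, hyadj⟩ := Finset.mem_filter.mp hy
    obtain ⟨hy'K, hy'adj⟩ := Finset.mem_filter.mp hy'
    rcases mem_Kf.mp hyK with h | ⟨i, h⟩
    · exact hcx (h ▸ hyadj)
    rcases mem_Kf.mp hy'K with h' | ⟨j, h'⟩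
    · exact hc'x (h' ▸ hy'adj)
    subst h; subst h'
    exact no_pentagon hn (hadj i) hyadj.symm hcc' hy'adj ((hadj j).symm)
  rcases hempty with h | h
  · rw [h, Finset.empty_union]
    exact F1 hn hadj hc'K
  · rw [h, Finset.union_empty]
    exact F1 hn hadj hcK

lemma aux (hn : 5 ≤ n) (x : Fin n → ZMod 2) (xs : Fin r → Fin n → ZMod 2)
    (hadj : ∀ i, (FQ n).Adj x (xs i)) :
    ∀ k, 2 ≤ k → ∀ C : Finset (Fin n → ZMod 2), C.card = k →
      (∀ c ∈ C, c ∉ Kf x xs) →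
      ((FQ n).induce (C : Set (Fin n → ZMod 2))).Connected →
      ((Kf x xs).filter fun y => ∃ c ∈ C, (FQ n).Adj c y).card ≤ 2 * (k - 1) := by
  intro k hk
  induction k, hk using Nat.le_induction with
  | base =>
    intro C hcard hdisj hconn
    obtain ⟨c, c', hne, hC⟩ := Finset.card_eq_two.mp hcard
    have hcC : c ∈ C := by rw [hC]; simp
    have hc'C : c' ∈ C := by rw [hC]; simp
    have hadjcc := two_adj hconn hne hC
    have hsub : ((Kf x xs).filter fun y => ∃ d ∈ C, (FQ n).Adj d y) ⊆
        NK x xs c ∪ NK x xs c' := by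
      intro y hy
      obtain ⟨hyK, d, hdC, hdy⟩ := Finset.mem_filter.mp hy
      rw [hC] at hdC
      rcases Finset.mem_insert.mp hdC with h | h
      · exact Finset.mem_union_left _ (Finset.mem_filter.mpr ⟨hyK, h ▸ hdy⟩)
      · have h' := Finset.mem_singleton.mp h
        exact Finset.mem_union_right _ (Finset.mem_filter.mpr ⟨hyK, h' ▸ hdy⟩)
    have hb := F2 hn hadj hadjcc (hdisj c hcC) (hdisj c' hc'C)
    have := (Finset.card_le_card hsub).trans hb
    omega
  | succ k hk ih =>
    intro C hcard hdisj hconn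
    obtain ⟨v, hvC, hecard, heconn⟩ := removable hconn (by omega)
    have hecard' : (C.erase v).card = k := by rw [hecard, hcard]; omega
    have hb := ih (C.erase v) hecard'
      (fun c hc => hdisj c (Finset.mem_of_mem_erase hc)) heconn
    have hsub : ((Kf x xs).filter fun y => ∃ c ∈ C, (FQ n).Adj c y) ⊆
        ((Kf x xs).filter fun y => ∃ c ∈ C.erase v, (FQ n).Adj c y) ∪ NK x xs v := by
      intro y hy
      obtain ⟨hyK, d, hdC, hdy⟩ := Finset.mem_filter.mp hy
      by_cases hdv : d = v
      · exact Finset.mem_union_right _ (Finset.mem_filter.mpr ⟨hyK, hdv ▸ hdy⟩)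
      · exact Finset.mem_union_left _
          (Finset.mem_filter.mpr ⟨hyK, d, Finset.mem_erase.mpr ⟨hdv, hdC⟩, hdy⟩)
    have hv2 := F1 hn hadj (hdisj v hvC)
    have hcount := (Finset.card_le_card hsub).trans (Finset.card_union_le _ _)
    omega

end FQaux

/-- A connected subgraph C of FQ_n (n ≥ 5) disjoint from a star K_{1,r}
(2 ≤ r ≤ n + 1) with k ≥ 2 vertices has at most 2(k-1) neighbors among the
star's vertices. -/
theorem folded_hypercube_star_connected_neighbors (n r : ℕ) (hn : 5 ≤ n)
    (hr : 2 ≤ r) (hrn : r ≤ n + 1)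
    (x : Fin n → ZMod 2) (xs : Fin r → (Fin n → ZMod 2))
    (hinj : Function.Injective xs) (hadj : ∀ i, (FQ n).Adj x (xs i))
    (C : Finset (Fin n → ZMod 2)) (hk : 2 ≤ C.card)
    (hdisj : ∀ c ∈ C, c ∉ insert x (Set.range xs))
    (hconn : ((FQ n).induce (C : Set (Fin n → ZMod 2))).Connected) :
    ((insert x (Set.range xs)) ∩ {y | ∃ c ∈ C, (FQ n).Adj c y}).ncard
      ≤ 2 * (C.card - 1) := by
  have hset : (insert x (Set.range xs)) ∩ {y | ∃ c ∈ C, (FQ n).Adj c y} =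
      ↑((FQaux.Kf x xs).filter fun y => ∃ c ∈ C, (FQ n).Adj c y) := by
    ext y
    simp only [Finset.coe_filter, Set.mem_inter_iff, Set.mem_setOf_eq, Set.mem_insert_iff,
      Set.mem_range, FQaux.Kf, Finset.mem_insert, Finset.mem_image, Finset.mem_univ, true_and]
  rw [hset, Set.ncard_coe_finset]
  refine FQaux.aux hn x xs hadj C.card hk C rfl (fun c hc => ?_) hconn
  intro hmem
  apply hdisj c hc
  rcases Finset.mem_insert.mp hmem with h | h
  · exact Set.mem_insert_iff.mpr (Or.inl h)
  · obtain ⟨i, -, hi⟩ := Finset.mem_image.mp h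
    exact Set.mem_insert_iff.mpr (Or.inr ⟨i, hi⟩)
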